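/- Let W ∈ ℝ^{n×n} be row stochastic and suppose there exist a stochastic vector ψ ∈ ℝ^n and constants C ≥ 0, q ∈ [0,1) such that |(W^k)_{ji} − ψ_i| ≤ C q^k for all i, j ∈ [n] and all k ≥ 1. Then for any matrices G_0, …, G_t ∈ ℝ^{d×n} and any t ≥ 0, ‖ Σ_{s=0}^t ( n G_s W^{t−s+1} − G_s 1 1ᵀ W^{t+1} ) ‖_F ≤ 2 n² C q Σ_{s=0}^t q^{t−s} ‖G_s‖_F. -/

import Mathlib

/-- Frobenius norm of a real matrix. -/
noncomputable def frobNorm {d n : ℕ} (A : Matrix (Fin d) (Fin n) ℝ) : ℝ :=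
  Real.sqrt (∑ r, ∑ i, (A r i) ^ 2)

/-- Embedding of matrices into Euclidean space, as a linear map. -/
noncomputable def matEmb (d n : ℕ) :
    Matrix (Fin d) (Fin n) ℝ →ₗ[ℝ] EuclideanSpace ℝ (Fin d × Fin n) where
  toFun A := WithLp.toLp 2 (fun p : Fin d × Fin n => A p.1 p.2)
  map_add' A B := rfl
  map_smul' c A := rfl

lemma frobNorm_eq_norm {d n : ℕ} (A : Matrix (Fin d) (Fin n) ℝ) :
    frobNorm A = ‖matEmb d n A‖ := by
  rw [EuclideanSpace.norm_eq, frobNorm]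
  congr 1
  rw [Fintype.sum_prod_type]
  simp [matEmb, Real.norm_eq_abs, sq_abs]
  rfl

lemma frobNorm_sum_le {d n : ℕ} {ι : Type*} (s : Finset ι)
    (f : ι → Matrix (Fin d) (Fin n) ℝ) :
    frobNorm (∑ i ∈ s, f i) ≤ ∑ i ∈ s, frobNorm (f i) := by
  simp only [frobNorm_eq_norm, map_sum]
  exact norm_sum_le _ _

theorem frobenius_deviation_bound
    (n d : ℕ) (hn : 0 < n)
    (W : Matrix (Fin n) (Fin n) ℝ)
    (hW_nonneg : ∀ i j, 0 ≤ W i j)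
    (hW_row : ∀ i, ∑ j, W i j = 1)
    (ψ : Fin n → ℝ) (hψ0 : ∀ i, 0 ≤ ψ i) (hψ1 : ∑ i, ψ i = 1)
    (C q : ℝ) (hC : 0 ≤ C) (hq0 : 0 ≤ q) (hq1 : q < 1)
    (hWgeom : ∀ k : ℕ, 1 ≤ k → ∀ i j : Fin n, |(W ^ k) j i - ψ i| ≤ C * q ^ k)
    (G : ℕ → Matrix (Fin d) (Fin n) ℝ) (t : ℕ) :
    frobNorm (∑ s ∈ Finset.range (t + 1),
        ((n : ℝ) • (G s * W ^ (t - s + 1))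
          - G s * (Matrix.of fun _ _ : Fin n => (1 : ℝ)) * W ^ (t + 1)))
      ≤ 2 * (n : ℝ) ^ 2 * C * q * ∑ s ∈ Finset.range (t + 1), q ^ (t - s) * frobNorm (G s) := by
  have key : ∀ s ∈ Finset.range (t + 1),
      frobNorm ((n : ℝ) • (G s * W ^ (t - s + 1))
          - G s * (Matrix.of fun _ _ : Fin n => (1 : ℝ)) * W ^ (t + 1))
        ≤ 2 * (n : ℝ) ^ 2 * C * q * (q ^ (t - s) * frobNorm (G s)) := by
    intro s hs
    set p := t - s + 1 with hp
    set A := (n : ℝ) • (G s * W ^ p)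
          - G s * (Matrix.of fun _ _ : Fin n => (1 : ℝ)) * W ^ (t + 1) with hA
    -- entry formula
    have entry : ∀ r i, A r i
        = ∑ j, G s r j * (∑ l, ((W ^ p) j i - (W ^ (t + 1)) l i)) := by
      intro r i
      have h1 : A r i = (n : ℝ) * ∑ j, G s r j * (W ^ p) j i
          - ∑ l, (∑ j, G s r j) * (W ^ (t + 1)) l i := by
        simp [hA, Matrix.mul_apply, Matrix.sub_apply, Matrix.smul_apply]
      have h2 : (n : ℝ) * ∑ j, G s r j * (W ^ p) j i
          = ∑ l : Fin n, ∑ j, G s r j * (W ^ p) j i := by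
        simp [Finset.sum_const]
      rw [h1, h2, ← Finset.sum_sub_distrib]
      simp only [Finset.sum_mul, ← Finset.sum_sub_distrib]
      rw [Finset.sum_comm]
      simp only [Finset.mul_sum, mul_sub]
    -- entrywise bound
    have hcoef : ∀ (j i : Fin n), |∑ l, ((W ^ p) j i - (W ^ (t + 1)) l i)|
        ≤ (n : ℝ) * (2 * C * q ^ p) := by
      intro j i
      calc |∑ l, ((W ^ p) j i - (W ^ (t + 1)) l i)|
          ≤ ∑ l, |(W ^ p) j i - (W ^ (t + 1)) l i| := Finset.abs_sum_le_sum_abs _ _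
        _ ≤ ∑ _l : Fin n, (2 * C * q ^ p) := by
            apply Finset.sum_le_sum
            intro l _
            have h3 : (W ^ p) j i - (W ^ (t + 1)) l i
                = ((W ^ p) j i - ψ i) - ((W ^ (t + 1)) l i - ψ i) := by ring
            rw [h3]
            calc |((W ^ p) j i - ψ i) - ((W ^ (t + 1)) l i - ψ i)|
                ≤ |(W ^ p) j i - ψ i| + |(W ^ (t + 1)) l i - ψ i| := abs_sub _ _
              _ ≤ C * q ^ p + C * q ^ (t + 1) := by
                  gcongr
                  · exact hWgeom p (Nat.le_add_left 1 _) i j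
                  · exact hWgeom (t + 1) (Nat.le_add_left 1 _) i l
              _ ≤ C * q ^ p + C * q ^ p := by
                  have : q ^ (t + 1) ≤ q ^ p :=
                    pow_le_pow_of_le_one hq0 hq1.le (by omega)
                  have := mul_le_mul_of_nonneg_left this hC
                  linarith
              _ = 2 * C * q ^ p := by ring
        _ = (n : ℝ) * (2 * C * q ^ p) := by simp [Finset.sum_const]
    have hK1 : (0 : ℝ) ≤ 2 * (n : ℝ) * C * q ^ p := by positivity
    have hb : ∀ r i, |A r i| ≤ (2 * (n : ℝ) * C * q ^ p) * ∑ j, |G s r j| := by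
      intro r i
      rw [entry]
      calc |∑ j, G s r j * (∑ l, ((W ^ p) j i - (W ^ (t + 1)) l i))|
          ≤ ∑ j, |G s r j * (∑ l, ((W ^ p) j i - (W ^ (t + 1)) l i))| :=
            Finset.abs_sum_le_sum_abs _ _
        _ ≤ ∑ j, |G s r j| * ((n : ℝ) * (2 * C * q ^ p)) := by
            apply Finset.sum_le_sum
            intro j _
            rw [abs_mul]
            exact mul_le_mul_of_nonneg_left (hcoef j i) (abs_nonneg _)
        _ = (2 * (n : ℝ) * C * q ^ p) * ∑ j, |G s r j| := by
            rw [← Finset.sum_mul]; ring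
    -- sum of squares bound
    have hsq : ∑ r, ∑ i, (A r i) ^ 2
        ≤ (2 * (n : ℝ) ^ 2 * C * q ^ p) ^ 2 * ∑ r, ∑ j, (G s r j) ^ 2 := by
      have step1 : ∀ r i, (A r i) ^ 2
          ≤ (2 * (n : ℝ) * C * q ^ p) ^ 2 * (∑ j, |G s r j|) ^ 2 := by
        intro r i
        rw [← mul_pow, ← sq_abs (A r i)]
        exact pow_le_pow_left₀ (abs_nonneg _) (hb r i) 2
      have step2 : ∀ r, (∑ j, |G s r j|) ^ 2 ≤ (n : ℝ) * ∑ j, (G s r j) ^ 2 := by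
        intro r
        have := sq_sum_le_card_mul_sum_sq (s := (Finset.univ : Finset (Fin n)))
          (f := fun j => |G s r j|)
        simpa [sq_abs] using this
      calc ∑ r, ∑ i, (A r i) ^ 2
          ≤ ∑ r, ∑ _i : Fin n,
              (2 * (n : ℝ) * C * q ^ p) ^ 2 * (∑ j, |G s r j|) ^ 2 := by
            apply Finset.sum_le_sum; intro r _
            apply Finset.sum_le_sum; intro i _
            exact step1 r i
        _ = ∑ r, (n : ℝ) * ((2 * (n : ℝ) * C * q ^ p) ^ 2 * (∑ j, |G s r j|) ^ 2) := by
            simp [Finset.sum_const]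
        _ ≤ ∑ r, (n : ℝ) * ((2 * (n : ℝ) * C * q ^ p) ^ 2
              * ((n : ℝ) * ∑ j, (G s r j) ^ 2)) := by
            apply Finset.sum_le_sum; intro r _
            gcongr
            exact step2 r
        _ = (2 * (n : ℝ) ^ 2 * C * q ^ p) ^ 2 * ∑ r, ∑ j, (G s r j) ^ 2 := by
            rw [Finset.mul_sum]
            congr 1; ext r; ring
    -- conclude
    have hK2 : (0 : ℝ) ≤ 2 * (n : ℝ) ^ 2 * C * q ^ p := by positivity
    have hfin : frobNorm A ≤ (2 * (n : ℝ) ^ 2 * C * q ^ p) * frobNorm (G s) := by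
      rw [frobNorm, frobNorm]
      calc Real.sqrt (∑ r, ∑ i, (A r i) ^ 2)
          ≤ Real.sqrt ((2 * (n : ℝ) ^ 2 * C * q ^ p) ^ 2
              * ∑ r, ∑ j, (G s r j) ^ 2) := Real.sqrt_le_sqrt hsq
        _ = (2 * (n : ℝ) ^ 2 * C * q ^ p)
              * Real.sqrt (∑ r, ∑ j, (G s r j) ^ 2) := by
            rw [Real.sqrt_mul (sq_nonneg _), Real.sqrt_sq hK2]
    calc frobNorm A ≤ (2 * (n : ℝ) ^ 2 * C * q ^ p) * frobNorm (G s) := hfin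
      _ = 2 * (n : ℝ) ^ 2 * C * q * (q ^ (t - s) * frobNorm (G s)) := by
          rw [hp, pow_succ]
          ring
  calc frobNorm (∑ s ∈ Finset.range (t + 1),
        ((n : ℝ) • (G s * W ^ (t - s + 1))
          - G s * (Matrix.of fun _ _ : Fin n => (1 : ℝ)) * W ^ (t + 1)))
      ≤ ∑ s ∈ Finset.range (t + 1),
          frobNorm ((n : ℝ) • (G s * W ^ (t - s + 1))
            - G s * (Matrix.of fun _ _ : Fin n => (1 : ℝ)) * W ^ (t + 1)) :=
        frobNorm_sum_le _ _
    _ ≤ ∑ s ∈ Finset.range (t + 1),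
          2 * (n : ℝ) ^ 2 * C * q * (q ^ (t - s) * frobNorm (G s)) :=
        Finset.sum_le_sum key
    _ = 2 * (n : ℝ) ^ 2 * C * q
          * ∑ s ∈ Finset.range (t + 1), q ^ (t - s) * frobNorm (G s) := by
        rw [Finset.mul_sum]
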